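/- Let G ⊂ SL(3,ℝ) be the subgroup of matrices b⋊a = [[ (det a)^{-1}, b ], [0, a]] with a ∈ GL⁺(2,ℝ) and b a row vector in ℝ_2. Then the map (b⋊a) ↦ j²₀ f_{a,b}, where f_{a,b}(x) = (det a) a·x / (1 + (det a) b·x), is a group homomorphism into 2-jets at 0 of local diffeomorphisms of ℝ² fixing 0; equivalently, f_{a,b} ∘ f_{a',b'} and f_{a'',b''} with a'' , b'' determined by the matrix product (b⋊a)(b'⋊a') agree to second order at 0. -/

import Mathlib

/-- The fractional-linear map `f_{a,b} : x ↦ (det a) a·x / (1 + (det a) b·x)` on `ℝ²`,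
for `a` a `2×2` matrix and `b` a row vector. -/
noncomputable def flt (a : Matrix (Fin 2) (Fin 2) ℝ) (b : Fin 2 → ℝ)
    (x : Fin 2 → ℝ) : Fin 2 → ℝ :=
  (1 + a.det * (dotProduct b x))⁻¹ • (a.det • a.mulVec x)

/-- The map `b⋊a ↦ j²₀ f_{a,b}` is a group homomorphism into `2`-jets at `0` of local
diffeomorphisms of `ℝ²` fixing `0`:  `f_{a,b} ∘ f_{a',b'}` and `f_{a'',b''}`, where
`a'' = a a'` and `b'' = (det a)⁻¹ b' + b a'` are determined by the matrix product
`(b⋊a)(b'⋊a')`, agree to second order at `0` (equal iterated derivatives of order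
`n ≤ 2` at `0`). -/
theorem fractional_linear_two_jet_hom
    (a a' : Matrix (Fin 2) (Fin 2) ℝ) (b b' : Fin 2 → ℝ)
    (ha : 0 < a.det) (ha' : 0 < a'.det) :
    ∀ n : ℕ, n ≤ 2 →
      iteratedFDeriv ℝ n (flt a b ∘ flt a' b') 0 =
        iteratedFDeriv ℝ n (flt (a * a') (a.det⁻¹ • b' + Matrix.vecMul b a')) 0 := by
  intro n _
  have hda : a.det ≠ 0 := ne_of_gt ha
  have hc : Continuous fun x : Fin 2 → ℝ => 1 + a'.det * dotProduct b' x := by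
    unfold dotProduct
    fun_prop
  have hev : ∀ᶠ x in nhds (0 : Fin 2 → ℝ),
      (1 + a'.det * dotProduct b' x) ≠ 0 := by
    apply hc.continuousAt.eventually_ne
    simp
  have heq : (flt a b ∘ flt a' b') =ᶠ[nhds 0]
      flt (a * a') (a.det⁻¹ • b' + Matrix.vecMul b a') := by
    filter_upwards [hev] with x hx
    set D := 1 + a'.det * dotProduct b' x with hDdef
    set p := dotProduct (Matrix.vecMul b a') x with hpdef
    have hbd : dotProduct b (flt a' b' x) = D⁻¹ * (a'.det * p) := by
      rw [flt, dotProduct_smul, dotProduct_smul,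
        Matrix.dotProduct_mulVec, smul_eq_mul, smul_eq_mul, ← hDdef, ← hpdef]
    have hmv : a.mulVec (flt a' b' x) = (D⁻¹ * a'.det) • (a * a').mulVec x := by
      rw [flt, Matrix.mulVec_smul, Matrix.mulVec_smul, Matrix.mulVec_mulVec,
        ← hDdef, smul_smul]
    show flt a b (flt a' b' x) = _
    rw [show flt a b (flt a' b' x)
        = (1 + a.det * dotProduct b (flt a' b' x))⁻¹ •
          (a.det • a.mulVec (flt a' b' x)) from rfl, hbd, hmv, flt]
    simp only [smul_smul]
    congr 1
    have hrhs : 1 + (a * a').det *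
        dotProduct (a.det⁻¹ • b' + Matrix.vecMul b a') x
        = D + a.det * a'.det * p := by
      rw [Matrix.det_mul, add_dotProduct, smul_dotProduct,
        ← hpdef, hDdef, smul_eq_mul]
      field_simp
      ring
    have hlhs : 1 + a.det * (D⁻¹ * (a'.det * p)) = (D + a.det * a'.det * p) / D := by
      field_simp
    rw [hrhs, hlhs, Matrix.det_mul]
    rcases eq_or_ne (D + a.det * a'.det * p) 0 with h | h
    · simp [h]
    · field_simp
  have hx0 : (flt a b ∘ flt a' b') 0
      = flt (a * a') (a.det⁻¹ • b' + Matrix.vecMul b a') 0 := heq.self_of_nhds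
  have heq' : (flt a b ∘ flt a' b')
      =ᶠ[nhdsWithin 0 Set.univ] flt (a * a') (a.det⁻¹ • b' + Matrix.vecMul b a') := by
    rwa [nhdsWithin_univ]
  have := heq'.iteratedFDerivWithin_eq (𝕜 := ℝ) hx0 n
  simpa [iteratedFDerivWithin_univ] using this
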